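/- Let V ~ Binomial(n, 1/2). Then E[ V / (n + 1 - V) ] = 1 - 2^{-n}; in particular E[ V / (n + 1 - V) ] ≤ 1. -/

import Mathlib

open MeasureTheory
open scoped ENNReal

/-- Terminal value bound for the knockoff supermartingale: if `V ~ Binomial(n, 1/2)`,
then `E[V / (n + 1 - V)] = 1 - 2⁻ⁿ ≤ 1`. -/
theorem stmt_16 {Ω : Type*} [MeasurableSpace Ω] (μ : Measure Ω) [IsProbabilityMeasure μ]
    (n : ℕ) (V : Ω → ℕ) (hV : Measurable V)
    (hbin : ∀ k : ℕ, μ {ω | V ω = k} = (n.choose k : ℝ≥0∞) * (2 : ℝ≥0∞)⁻¹ ^ n) :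
    ∫ ω, (V ω : ℝ) / ((n : ℝ) + 1 - (V ω : ℝ)) ∂μ = 1 - (2 : ℝ)⁻¹ ^ n ∧
    ∫ ω, (V ω : ℝ) / ((n : ℝ) + 1 - (V ω : ℝ)) ∂μ ≤ 1 := by
  classical
  set g : ℕ → ℝ := fun k => (k : ℝ) / ((n : ℝ) + 1 - (k : ℝ)) with hg
  have hms : ∀ k : ℕ, MeasurableSet {ω | V ω = k} := fun k =>
    hV (measurableSet_singleton k)
  -- V ≤ n almost everywhere
  have hbig : μ {ω | n < V ω} = 0 := by
    have hsub : {ω | n < V ω} ⊆ ⋃ k : ℕ, {ω | V ω = (n + 1) + k} := by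
      intro ω hω
      simp only [Set.mem_setOf_eq] at hω
      refine Set.mem_iUnion.2 ⟨V ω - (n + 1), ?_⟩
      simp only [Set.mem_setOf_eq]
      omega
    refine le_antisymm ?_ (zero_le)
    refine le_trans (measure_mono hsub) ?_
    refine le_trans (measure_iUnion_le _) ?_
    have : ∀ k : ℕ, μ {ω | V ω = (n + 1) + k} = 0 := by
      intro k
      rw [hbin]
      rw [Nat.choose_eq_zero_of_lt (by omega)]
      simp
    simp [this]
  have hae : (fun ω => (V ω : ℝ) / ((n : ℝ) + 1 - (V ω : ℝ)))
      =ᵐ[μ] fun ω => ∑ k ∈ Finset.range (n + 1),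
        Set.indicator {ω | V ω = k} (fun _ => g k) ω := by
    refine (measure_mono_null ?_ hbig : μ _ = 0)
    intro ω hω
    simp only [Set.mem_compl_iff, Set.mem_setOf_eq] at hω ⊢
    by_contra hle
    push_neg at hle
    apply hω
    rw [Finset.sum_eq_single (V ω)]
    · simp [Set.indicator, g]
    · intro k _ hk
      exact Set.indicator_of_notMem (fun h => hk h.symm) _
    · intro h
      exact absurd (Finset.mem_range.2 (by omega)) h
  have hint : ∫ ω, (V ω : ℝ) / ((n : ℝ) + 1 - (V ω : ℝ)) ∂μ
      = ∑ k ∈ Finset.range (n + 1), g k * (μ {ω | V ω = k}).toReal := by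
    rw [integral_congr_ae hae, integral_finset_sum]
    · refine Finset.sum_congr rfl fun k _ => ?_
      rw [integral_indicator_const _ (hms k)]
      simp [mul_comm]
      exact Or.inl rfl
    · intro k _
      exact (integrable_const (g k)).indicator (hms k)
  -- evaluate the probabilities
  have hto : ∀ k : ℕ, (μ {ω | V ω = k}).toReal = (n.choose k : ℝ) * (2 : ℝ)⁻¹ ^ n := by
    intro k
    rw [hbin]
    rw [ENNReal.toReal_mul, ENNReal.toReal_pow, ENNReal.toReal_inv]
    simp
  -- key combinatorial step
  have hterm : ∀ k ∈ Finset.range (n + 1),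
      g k * (n.choose k : ℝ) = if k = 0 then 0 else (n.choose (k - 1) : ℝ) := by
    intro k hk
    rw [Finset.mem_range] at hk
    rcases Nat.eq_zero_or_pos k with h0 | h0
    · simp [h0, g]
    · rw [if_neg (by omega)]
      have hnat : n.choose k * k = n.choose (k - 1) * (n + 1 - k) := by
        have := Nat.choose_succ_right_eq n (k - 1)
        have hk1 : k - 1 + 1 = k := by omega
        rw [hk1] at this
        rw [this]
        congr 1
        omega
      have hden : (n : ℝ) + 1 - (k : ℝ) ≠ 0 := by
        have : (k : ℝ) ≤ n := by exact_mod_cast Nat.le_of_lt_succ hk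
        linarith
      have hcast : (n.choose k : ℝ) * k = (n.choose (k - 1) : ℝ) * ((n : ℝ) + 1 - k) := by
        have := congrArg (Nat.cast : ℕ → ℝ) hnat
        push_cast at this
        rw [this]
        have : ((n + 1 - k : ℕ) : ℝ) = (n : ℝ) + 1 - k := by
          rw [Nat.cast_sub (by omega)]
          push_cast; ring
        rw [this]
      simp only [g]
      rw [div_mul_eq_mul_div, div_eq_iff hden]
      linarith [hcast]
  have hsum : ∑ k ∈ Finset.range (n + 1), g k * (n.choose k : ℝ)
      = (2 : ℝ) ^ n - 1 := by
    rw [Finset.sum_congr rfl hterm, Finset.sum_range_succ']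
    simp only [if_neg (Nat.succ_ne_zero _), if_pos rfl, Nat.add_sub_cancel, add_zero]
    have h2 : ∑ j ∈ Finset.range (n + 1), (n.choose j : ℝ) = (2 : ℝ) ^ n := by
      exact_mod_cast congrArg (Nat.cast : ℕ → ℝ) (Nat.sum_range_choose n)
    rw [Finset.sum_range_succ] at h2
    simp at h2 ⊢
    linarith
  have hval : ∫ ω, (V ω : ℝ) / ((n : ℝ) + 1 - (V ω : ℝ)) ∂μ = 1 - (2 : ℝ)⁻¹ ^ n := by
    rw [hint]
    simp_rw [hto, ← mul_assoc]
    rw [← Finset.sum_mul, hsum]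
    have h2n : (2 : ℝ) ^ n ≠ 0 := by positivity
    rw [inv_pow]
    field_simp
  refine ⟨hval, ?_⟩
  rw [hval]
  have : (0 : ℝ) ≤ (2 : ℝ)⁻¹ ^ n := by positivity
  linarith
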